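/- For every path P of π there is a unique element of P with the maximum extended rank (among elements whose extended rank is defined). -/

import Mathlib

/-- The `b`-local minima of a path, represented as the list of values (in path order):
a position is kept iff its value is smaller than all values at distance at most `b` in the
list, comparisons with out-of-range (undefined) positions being disregarded. -/
def pmins (b : ℕ) (l : List ℕ) : List ℕ :=
  (List.range l.length).filterMap fun p =>
    if ∀ q ∈ List.range l.length, q ≠ p → p ≤ q + b → q ≤ p + b → l.getD p 0 < l.getD q 0
    then some (l.getD p 0) else none

/-- `plevel b l r` is the list of elements of `E_{r+1}` of the path `l` (0-indexed:
`plevel b l 0 = l` is `E_1`), in path order. -/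
def plevel (b : ℕ) (l : List ℕ) : ℕ → List ℕ
  | 0 => l
  | r + 1 => pmins b (plevel b l r)

/-- Advance `s` steps along the (level) list `l` from the element with value `v`;
`none` if undefined (i.e. `v ∉ l` or the advance would run past the end of the path). -/
def padv (s : ℕ) (l : List ℕ) (v : ℕ) : Option ℕ :=
  if v ∈ l ∧ l.idxOf v + s < l.length then some (l.getD (l.idxOf v + s) 0) else none

/-- Retreat `s` steps along the (level) list `l` from the element with value `v`;
`none` if undefined. -/
def pret (s : ℕ) (l : List ℕ) (v : ℕ) : Option ℕ :=
  if v ∈ l ∧ s ≤ l.idxOf v then some (l.getD (l.idxOf v - s) 0) else none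

/-- `iSeqP b l i k` is the element `i_{k+1}` of the (tentative) `b`-staircase from `i` on the
path `l`: `i_1 = i` and `i_{k+1} = π_k^b(i_k)`; `none` if undefined. -/
def iSeqP (b : ℕ) (l : List ℕ) (i : ℕ) : ℕ → Option ℕ
  | 0 => if i ∈ l then some i else none
  | k + 1 => (iSeqP b l i k).bind (padv b (plevel b l k))

/-- `jSeqP b l r m q` is the element `j_{r+1-q}` of the descending part of the `b`-staircase of
size `r` with middle `m` on the path `l`: `j_{r+1} = m` and `j_k = π_k^b(j_{k+1})`. -/
def jSeqP (b : ℕ) (l : List ℕ) (r m : ℕ) : ℕ → Option ℕ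
  | 0 => some m
  | q + 1 => (jSeqP b l r m q).bind (padv b (plevel b l (r - (q + 1))))

/-- There is a `b`-staircase of size `r` from `i` on the path `l`. -/
def IsStaircaseP (b : ℕ) (l : List ℕ) (r i : ℕ) : Prop :=
  ∃ m, iSeqP b l i r = some m ∧ m ∈ plevel b l r ∧ (jSeqP b l r m r).isSome

/-- There is an almost `b`-staircase of size `r` from `i` on the path `l`
(membership in `E_k` required only for `k ∈ [r]`). -/
def IsAlmostP (b : ℕ) (l : List ℕ) (r i : ℕ) : Prop :=
  ∃ m, iSeqP b l i r = some m ∧ (jSeqP b l r m r).isSome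

/-- The `b`-staircase of size `r` from `i` is the best one: on a path every almost
`b`-staircase is proper, so `i` has no almost `b`-staircase of size `r+1`. -/
def IsBestP (b : ℕ) (l : List ℕ) (r i : ℕ) : Prop :=
  IsStaircaseP b l r i ∧ ¬ IsAlmostP b l (r + 1) i

/-- There is a half `b`-staircase of size `r` from `i` on the path `l`:
`i_1 = i, …, i_{r+1} = m = j_r, j_{r-1}, …, j_1`. -/
def IsHalfP (b : ℕ) (l : List ℕ) (r i : ℕ) : Prop :=
  ∃ m, iSeqP b l i r = some m ∧ (jSeqP b l (r - 1) m (r - 1)).isSome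

/-- `ExtRank b l i v` says that the extended rank of `i` on the path `l` is `(t, h)`,
encoded (lexicographically faithfully) as the natural number `v = 2t + h`, where `t` is the
rank of `i` (the size of the best staircase from `i`) and `h` records whether a half staircase
of size `t+1` from `i` exists. -/
def ExtRank (b : ℕ) (l : List ℕ) (i v : ℕ) : Prop :=
  ∃ t, IsBestP b l t i ∧
    ((IsHalfP b l (t + 1) i ∧ v = 2 * t + 1) ∨ (¬ IsHalfP b l (t + 1) i ∧ v = 2 * t))

/-- `len(u,w) = min{k > 0 : π^k(u) = w}` (0 if unreachable). -/
noncomputable def lenTo {n : ℕ} (π : Equiv.Perm (Fin n)) (u w : Fin n) : ℕ :=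
  letI := Classical.propDecidable
  if h : ∃ k, 0 < k ∧ (⇑π)^[k] u = w then Nat.find h else 0

/-- The path obtained from the cycle of `π` containing `x` by cutting before `π(x)`
(i.e. setting `π(x) := ⊥`), as the list of its elements (values) in path order:
it starts at `π(x)` and ends at `x`. -/
noncomputable def pathOf {n : ℕ} (π : Equiv.Perm (Fin n)) (x : Fin n) : List ℕ :=
  (List.range (lenTo π x x)).map fun j => ((⇑π)^[j + 1] x).val

/-! ### Auxiliary lemmas -/

section Aux
open List

lemma filterMap_ite {α β : Type*} (c : α → Prop) [DecidablePred c] (g : α → β) (xs : List α) :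
    (xs.filterMap fun p => if c p then some (g p) else none)
      = (xs.filter fun p => decide (c p)).map g := by
  induction xs with
  | nil => simp
  | cons a xs ih => by_cases h : c a <;> simp [h, ih]

lemma map_getD_range (l : List ℕ) : (List.range l.length).map (fun p => l.getD p 0) = l := by
  apply List.ext_getElem
  · simp
  · intro i h1 h2
    simp only [List.getElem_map, List.getElem_range]
    exact List.getD_eq_getElem _ _ h2

lemma pmins_sublist (b : ℕ) (l : List ℕ) : pmins b l <+ l := by
  rw [pmins, filterMap_ite]
  conv_rhs => rw [← map_getD_range l]
  exact List.Sublist.map _ (List.filter_sublist)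

lemma plevel_sublist_le (b : ℕ) (l : List ℕ) {k s : ℕ} (h : k ≤ s) :
    plevel b l s <+ plevel b l k := by
  induction s with
  | zero => simp_all
  | succ s ih =>
    rcases Nat.lt_or_ge k (s+1) with h' | h'
    · exact (pmins_sublist b (plevel b l s)).trans (ih (by omega))
    · have : k = s + 1 := le_antisymm h h'
      subst this; exact List.Sublist.refl _

lemma plevel_sublist (b : ℕ) (l : List ℕ) (k : ℕ) : plevel b l k <+ l :=
  plevel_sublist_le b l (Nat.zero_le k)

lemma plevel_nodup {l : List ℕ} (hnd : l.Nodup) (b k : ℕ) : (plevel b l k).Nodup :=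
  (plevel_sublist b l k).nodup hnd

lemma sublist_indexOf_lt {l' l : List ℕ} (h : l' <+ l) (hnd : l.Nodup) :
    ∀ {u w : ℕ}, u ∈ l' → w ∈ l' → l'.idxOf u < l'.idxOf w →
      l.idxOf u < l.idxOf w := by
  induction h with
  | slnil => intro u w hu; simp at hu
  | cons a h ih =>
    intro u w hu hw hlt
    have ha : a ∉ _ := (List.nodup_cons.mp hnd).1
    have hnd' := (List.nodup_cons.mp hnd).2
    have hu' : u ≠ a := fun he => ha (he ▸ h.subset hu)
    have hw' : w ≠ a := fun he => ha (he ▸ h.subset hw)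
    rw [List.idxOf_cons_ne _ (Ne.symm hu'), List.idxOf_cons_ne _ (Ne.symm hw')]
    exact Nat.succ_lt_succ (ih hnd' hu hw hlt)
  | cons_cons a h ih =>
    intro u w hu hw hlt
    have hnd' := (List.nodup_cons.mp hnd).2
    by_cases hw' : w = a
    · subst hw'
      rw [List.idxOf_cons_self] at hlt
      omega
    · rw [List.idxOf_cons_ne _ (Ne.symm hw')] at hlt ⊢
      by_cases hu' : u = a
      · subst hu'; rw [List.idxOf_cons_self]; omega
      · rw [List.idxOf_cons_ne _ (Ne.symm hu')] at hlt ⊢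
        have hu'' : u ∈ _ := (List.mem_cons.mp hu).resolve_left hu'
        have hw'' : w ∈ _ := (List.mem_cons.mp hw).resolve_left hw'
        exact Nat.succ_lt_succ (ih hnd' hu'' hw'' (Nat.lt_of_succ_lt_succ hlt))

lemma sublist_indexOf_lt_iff {l' l : List ℕ} (h : l' <+ l) (hnd : l.Nodup)
    {u w : ℕ} (hu : u ∈ l') (hw : w ∈ l') :
    l'.idxOf u < l'.idxOf w ↔ l.idxOf u < l.idxOf w := by
  constructor
  · exact sublist_indexOf_lt h hnd hu hw
  · intro hlt
    rcases Nat.lt_trichotomy (l'.idxOf u) (l'.idxOf w) with h1 | h1 | h1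
    · exact h1
    · exfalso
      have := (List.idxOf_inj hu).mp h1
      subst this; omega
    · exfalso
      have := sublist_indexOf_lt h hnd hw hu h1
      omega

lemma sublist_indexOf_le {l' l : List ℕ} (h : l' <+ l) (hnd : l.Nodup)
    {u w : ℕ} (hu : u ∈ l') (hw : w ∈ l') (hle : l'.idxOf u ≤ l'.idxOf w) :
    l.idxOf u ≤ l.idxOf w := by
  rcases Nat.lt_or_ge (l'.idxOf u) (l'.idxOf w) with h1 | h1
  · exact le_of_lt ((sublist_indexOf_lt_iff h hnd hu hw).mp h1)
  · have : l'.idxOf u = l'.idxOf w := le_antisymm hle h1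
    have := (List.idxOf_inj hu).mp this
    subst this; exact le_rfl

lemma padv_eq_some {l : List ℕ} (hnd : l.Nodup) {v z : ℕ} (h : padv 1 l v = some z) :
    v ∈ l ∧ l.idxOf v + 1 < l.length ∧ z ∈ l ∧ l.idxOf z = l.idxOf v + 1 := by
  rw [padv] at h
  split_ifs at h with hc
  · obtain ⟨hv, hlen⟩ := hc
    have hz : z = l[l.idxOf v + 1] := by
      rw [← List.getD_eq_getElem l 0 hlen]; exact (Option.some_inj.mp h).symm
    subst hz
    exact ⟨hv, hlen, List.getElem_mem _, List.Nodup.idxOf_getElem hnd _ _⟩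

lemma padv_of_lt {l : List ℕ} (hnd : l.Nodup) {v : ℕ} (hv : v ∈ l)
    (hl : l.idxOf v + 1 < l.length) :
    ∃ z, padv 1 l v = some z ∧ z ∈ l ∧ l.idxOf z = l.idxOf v + 1 := by
  refine ⟨l.getD (l.idxOf v + 1) 0, ?_, ?_, ?_⟩
  · rw [padv, if_pos ⟨hv, hl⟩]
  · rw [List.getD_eq_getElem l 0 hl]; exact List.getElem_mem _
  · rw [List.getD_eq_getElem l 0 hl]; exact List.Nodup.idxOf_getElem hnd _ _

lemma padv_eq_none {l : List ℕ} {v : ℕ} (h : ¬ (v ∈ l ∧ l.idxOf v + 1 < l.length)) :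
    padv 1 l v = none := by
  rw [padv, if_neg h]

lemma jSeqP_succ (b : ℕ) (l : List ℕ) (r m q : ℕ) :
    jSeqP b l (r + 1) m (q + 1) = (padv b (plevel b l r) m).bind fun z => jSeqP b l r z q := by
  induction q with
  | zero =>
    show (jSeqP b l (r+1) m 0).bind _ = _
    rw [jSeqP]
    show (some m).bind (padv b (plevel b l r)) = _
    rw [Option.bind_some]
    cases hz : padv b (plevel b l r) m
    · rfl
    · rw [Option.bind_some, jSeqP]
  | succ q ih =>
    show (jSeqP b l (r+1) m (q+1)).bind _ = _
    rw [ih]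
    cases hz : padv b (plevel b l r) m with
    | none => simp
    | some z =>
      simp only [Option.bind_some]
      show _ = jSeqP b l r z (q + 1)
      rw [jSeqP]
      have : r + 1 - (q + 1 + 1) = r - (q + 1) := by omega
      rw [this]

lemma jD_succ_iff (l : List ℕ) (r m : ℕ) :
    (jSeqP 1 l (r + 1) m (r + 1)).isSome ↔
      ∃ z, padv 1 (plevel 1 l r) m = some z ∧ (jSeqP 1 l r z r).isSome := by
  rw [jSeqP_succ]
  cases hz : padv 1 (plevel 1 l r) m <;> simp

lemma jD_mono {l : List ℕ} (hnd : l.Nodup) :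
    ∀ r s m1 m2, r ≤ s + 1 → m1 ∈ plevel 1 l s → m2 ∈ plevel 1 l s →
      (plevel 1 l s).idxOf m1 ≤ (plevel 1 l s).idxOf m2 →
      (jSeqP 1 l r m2 r).isSome → (jSeqP 1 l r m1 r).isSome := by
  intro r
  induction r with
  | zero => intro s m1 m2 _ _ _ _ _; simp [jSeqP]
  | succ r ih =>
    intro s m1 m2 hrs h1 h2 hle hD2
    rw [jD_succ_iff] at hD2 ⊢
    obtain ⟨z2, hz2, hD2⟩ := hD2
    have hrs' : r ≤ s := by omega
    have hsub : plevel 1 l s <+ plevel 1 l r := plevel_sublist_le 1 l hrs'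
    have hndr : (plevel 1 l r).Nodup := plevel_nodup hnd 1 r
    have h1r : m1 ∈ plevel 1 l r := hsub.subset h1
    have h2r : m2 ∈ plevel 1 l r := hsub.subset h2
    have hler : (plevel 1 l r).idxOf m1 ≤ (plevel 1 l r).idxOf m2 :=
      sublist_indexOf_le hsub hndr h1 h2 hle
    obtain ⟨_, hlen2, hz2mem, hz2idx⟩ := padv_eq_some hndr hz2
    have hlen1 : (plevel 1 l r).idxOf m1 + 1 < (plevel 1 l r).length := by omega
    obtain ⟨z1, hz1, hz1mem, hz1idx⟩ := padv_of_lt hndr h1r hlen1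
    refine ⟨z1, hz1, ih r z1 z2 (by omega) hz1mem hz2mem (by omega) hD2⟩

lemma iSeq_mem {l : List ℕ} (hnd : l.Nodup) {i : ℕ} :
    ∀ k m, iSeqP 1 l i k = some m → m ∈ l := by
  intro k
  induction k with
  | zero =>
    intro m h
    rw [iSeqP] at h
    split_ifs at h with hc
    cases h; exact hc
  | succ k ih =>
    intro m h
    rw [iSeqP] at h
    obtain ⟨a, ha, hp⟩ := Option.bind_eq_some_iff.mp h
    have hndk : (plevel 1 l k).Nodup := plevel_nodup hnd 1 k
    obtain ⟨_, _, hm, _⟩ := padv_eq_some hndk hp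
    exact (plevel_sublist 1 l k).subset hm

lemma iSeq_mono {l : List ℕ} (hnd : l.Nodup) {i i' : ℕ}
    (hlt : l.idxOf i < l.idxOf i') :
    ∀ k m m', iSeqP 1 l i k = some m → iSeqP 1 l i' k = some m' →
      l.idxOf m < l.idxOf m' := by
  intro k
  induction k with
  | zero =>
    intro m m' h h'
    rw [iSeqP] at h h'
    split_ifs at h h' <;> simp_all
  | succ k ih =>
    intro m m' h h'
    rw [iSeqP] at h h'
    obtain ⟨a, ha, hp⟩ := Option.bind_eq_some_iff.mp h
    obtain ⟨a', ha', hp'⟩ := Option.bind_eq_some_iff.mp h'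
    have hndk : (plevel 1 l k).Nodup := plevel_nodup hnd 1 k
    have hsub := plevel_sublist 1 l k
    obtain ⟨hamem, _, hmmem, hmidx⟩ := padv_eq_some hndk hp
    obtain ⟨hamem', _, hmmem', hmidx'⟩ := padv_eq_some hndk hp'
    have hlta : l.idxOf a < l.idxOf a' := ih a a' ha ha'
    have h1 : (plevel 1 l k).idxOf a < (plevel 1 l k).idxOf a' :=
      (sublist_indexOf_lt_iff hsub hnd hamem hamem').mpr hlta
    have h2 : (plevel 1 l k).idxOf m < (plevel 1 l k).idxOf m' := by omega
    exact (sublist_indexOf_lt_iff hsub hnd hmmem hmmem').mp h2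

lemma iSeq_bound {l : List ℕ} (hnd : l.Nodup) {i : ℕ} :
    ∀ k m, iSeqP 1 l i k = some m → l.idxOf i + k ≤ l.idxOf m := by
  intro k
  induction k with
  | zero =>
    intro m h
    rw [iSeqP] at h
    split_ifs at h <;> simp_all
  | succ k ih =>
    intro m h
    rw [iSeqP] at h
    obtain ⟨a, ha, hp⟩ := Option.bind_eq_some_iff.mp h
    have hndk : (plevel 1 l k).Nodup := plevel_nodup hnd 1 k
    have hsub := plevel_sublist 1 l k
    obtain ⟨hamem, _, hmmem, hmidx⟩ := padv_eq_some hndk hp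
    have h1 : (plevel 1 l k).idxOf a < (plevel 1 l k).idxOf m := by omega
    have h2 : l.idxOf a < l.idxOf m :=
      (sublist_indexOf_lt_iff hsub hnd hamem hmmem).mp h1
    have := ih a ha
    omega

/-- Key injectivity: two distinct elements cannot have the same extended rank. -/
lemma extRank_asym {l : List ℕ} (hnd : l.Nodup) {i i' v : ℕ}
    (hi : i ∈ l) (hi' : i' ∈ l) (hlt : l.idxOf i < l.idxOf i')
    (hR : ExtRank 1 l i v) (hR' : ExtRank 1 l i' v) : False := by
  obtain ⟨t, ⟨hst, hna⟩, hcase⟩ := hR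
  obtain ⟨t', ⟨hst', _⟩, hcase'⟩ := hR'
  obtain ⟨m, him, hmmem, hmD⟩ := hst
  obtain ⟨m', him', hmmem', hmD'⟩ := hst'
  -- first unify t and t'
  have htt : t = t' := by rcases hcase with ⟨_, h1⟩ | ⟨_, h1⟩ <;>
    rcases hcase' with ⟨_, h2⟩ | ⟨_, h2⟩ <;> omega
  subst htt
  have hndt : (plevel 1 l t).Nodup := plevel_nodup hnd 1 t
  have hsubt := plevel_sublist 1 l t
  have hltm : (plevel 1 l t).idxOf m < (plevel 1 l t).idxOf m' :=
    (sublist_indexOf_lt_iff hsubt hnd hmmem hmmem').mpr (iSeq_mono hnd hlt t m m' him him')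
  have hm'len : (plevel 1 l t).idxOf m' < (plevel 1 l t).length :=
    List.idxOf_lt_length_iff.mpr hmmem'
  -- the successor of m in level t exists
  obtain ⟨mm, hmm, hmmmem, hmmidx⟩ := padv_of_lt hndt hmmem (by omega)
  rcases hcase with ⟨hH, hv⟩ | ⟨hH, hv⟩
  · -- both have a half staircase of size t+1; derive an almost staircase of size t+1 from i
    rcases hcase' with ⟨hH', hv'⟩ | ⟨_, hv'⟩
    swap
    · omega
    obtain ⟨mm', himm', hD'⟩ := hH'
    rw [iSeqP, him'] at himm'
    simp only [Option.bind_some] at himm'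
    obtain ⟨_, hmm'len, hmm'mem, hmm'idx⟩ := padv_eq_some hndt himm'
    -- successor z of mm in level t exists
    obtain ⟨z, hz, hzmem, hzidx⟩ := padv_of_lt hndt hmmmem (by omega)
    have hDz : (jSeqP 1 l t z t).isSome := by
      have hDmm' : (jSeqP 1 l t mm' t).isSome := by
        exact hD'
      exact jD_mono hnd t t z mm' (by omega) hzmem hmm'mem (by omega) hDmm'
    exact hna ⟨mm, by rw [iSeqP, him]; exact hmm,
      (jD_succ_iff l t mm).mpr ⟨z, hz, hDz⟩⟩
  · -- neither has a half staircase, but i does have one: contradiction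
    apply hH
    have hDmm : (jSeqP 1 l t mm t).isSome :=
      jD_mono hnd t t mm m' (by omega) hmmmem hmmem' (by omega) hmD'
    refine ⟨mm, by rw [iSeqP, him]; exact hmm, ?_⟩
    exact hDmm

lemma extRank_bound {l : List ℕ} (hnd : l.Nodup) {i v : ℕ}
    (h : ExtRank 1 l i v) : v ≤ 2 * l.length + 1 := by
  obtain ⟨t, ⟨⟨m, him, hmmem, _⟩, _⟩, hcase⟩ := h
  have h1 := iSeq_bound hnd t m him
  have h2 : l.idxOf m < l.length := List.idxOf_lt_length_iff.mpr (iSeq_mem hnd t m him)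
  rcases hcase with ⟨_, hv⟩ | ⟨_, hv⟩ <;> omega

lemma extRank_last {l : List ℕ} (hnd : l.Nodup) {z : ℕ} (hz : z ∈ l)
    (hidx : l.idxOf z + 1 = l.length) : ExtRank 1 l z 0 := by
  have hnone : iSeqP 1 l z 1 = none := by
    rw [iSeqP, iSeqP, if_pos hz]
    simp only [Option.bind_some]
    refine padv_eq_none ?_
    rintro ⟨-, hcon⟩
    have hcon' : l.idxOf z + 1 < l.length := hcon
    omega
  refine ⟨0, ⟨⟨z, by rw [iSeqP, if_pos hz], hz, by rw [jSeqP]; rfl⟩, ?_⟩,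
    Or.inr ⟨?_, rfl⟩⟩
  · rintro ⟨m, hm, -⟩
    rw [hnone] at hm; cases hm
  · rintro ⟨m, hm, -⟩
    rw [hnone] at hm; cases hm

/-! ### Facts about `pathOf` -/

lemma lenTo_self_pos {n : ℕ} (π : Equiv.Perm (Fin n)) (x : Fin n) :
    0 < lenTo π x x ∧ (∀ k, 0 < k → k < lenTo π x x → (⇑π)^[k] x ≠ x) := by
  classical
  have hex : ∃ k, 0 < k ∧ (⇑π)^[k] x = x := by
    refine ⟨orderOf π, orderOf_pos π, ?_⟩
    rw [Equiv.Perm.iterate_eq_pow, pow_orderOf_eq_one]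
    rfl
  rw [lenTo]
  rw [dif_pos (hc := hex)]
  constructor
  · exact (@Nat.find_spec (fun k => 0 < k ∧ (⇑π)^[k] x = x)
      (fun a => Classical.propDecidable _) hex).1
  · intro k hk hklt he
    exact @Nat.find_min (fun k => 0 < k ∧ (⇑π)^[k] x = x)
      (fun a => Classical.propDecidable _) hex k hklt ⟨hk, he⟩

lemma pathOf_length {n : ℕ} (π : Equiv.Perm (Fin n)) (x : Fin n) :
    (pathOf π x).length = lenTo π x x := by
  rw [pathOf]; simp

lemma pathOf_nodup {n : ℕ} (π : Equiv.Perm (Fin n)) (x : Fin n) :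
    (pathOf π x).Nodup := by
  rw [pathOf]
  refine List.Nodup.map_on ?_ List.nodup_range
  intro j hj j' hj' he
  rw [List.mem_range] at hj hj'
  have he' : (⇑π)^[j + 1] x = (⇑π)^[j' + 1] x := Fin.val_injective he
  by_contra hne
  wlog hlt : j < j' generalizing j j'
  · exact this j' hj' j hj he.symm he'.symm (Ne.symm hne) (by omega)
  have hinj : Function.Injective ((⇑π)^[j + 1]) :=
    Function.Injective.iterate π.injective (j + 1)
  have hcomm : (⇑π)^[j' + 1] x = (⇑π)^[j + 1] ((⇑π)^[j' - j] x) := by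
    rw [← Function.iterate_add_apply]
    congr 1
    omega
  rw [hcomm] at he'
  have : (⇑π)^[j' - j] x = x := hinj he'.symm
  exact (lenTo_self_pos π x).2 (j' - j) (by omega) (by omega) this

end Aux

/-- (Fich et al., `b = 1`.)  For every path `P` of `π` there is a unique
element of `P` with the maximum extended rank (among elements whose extended rank is defined;
extended ranks `(t, h)` are compared lexicographically, i.e. via the encoding `2t + h`). -/
theorem exists_unique_max_extended_rank (n : ℕ) (π : Equiv.Perm (Fin n)) (x : Fin n)
    (P : List ℕ) (hP : P = pathOf π x) :
    ∃! i : ℕ, i ∈ P ∧ ∃ v, ExtRank 1 P i v ∧ ∀ j ∈ P, ∀ w, ExtRank 1 P j w → w ≤ v := by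
  classical
  have hnd : P.Nodup := hP ▸ pathOf_nodup π x
  have hlen : 0 < P.length := by
    rw [hP, pathOf_length]; exact (lenTo_self_pos π x).1
  -- last element of P
  set z := P[P.length - 1]'(by omega) with hzdef
  have hzmem : z ∈ P := List.getElem_mem _
  have hzidx : P.idxOf z + 1 = P.length := by
    have := List.Nodup.idxOf_getElem hnd (P.length - 1) (by omega)
    rw [← hzdef] at this
    omega
  have h0 : ExtRank 1 P z 0 := extRank_last hnd hzmem hzidx
  set p : ℕ → Prop := fun v => ∃ i ∈ P, ExtRank 1 P i v with hpdef
  have hp0 : p 0 := ⟨z, hzmem, h0⟩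
  set N := 2 * P.length + 1 with hN
  have hspec : p (Nat.findGreatest p N) := Nat.findGreatest_spec (Nat.zero_le N) hp0
  obtain ⟨i0, hi0, hR0⟩ := hspec
  have hmax : ∀ j ∈ P, ∀ w, ExtRank 1 P j w → w ≤ Nat.findGreatest p N := by
    intro j hj w hw
    exact Nat.le_findGreatest (extRank_bound hnd hw) ⟨j, hj, hw⟩
  refine ⟨i0, ⟨hi0, Nat.findGreatest p N, hR0, hmax⟩, ?_⟩
  rintro y ⟨hy, vy, hRy, hymax⟩
  have h1 : vy ≤ Nat.findGreatest p N := hmax y hy vy hRy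
  have h2 : Nat.findGreatest p N ≤ vy := hymax i0 hi0 _ hR0
  have hveq : vy = Nat.findGreatest p N := le_antisymm h1 h2
  subst hveq
  by_contra hne
  rcases Nat.lt_trichotomy (P.idxOf y) (P.idxOf i0) with hlt | heq | hlt
  · exact extRank_asym hnd hy hi0 hlt hRy hR0
  · exact hne ((List.idxOf_inj hy).mp heq)
  · exact extRank_asym hnd hi0 hy hlt hR0 hRy
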